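/- For any β > 0 and any λ, s ∈ ℝ^m, the function f(u) := max_{1≤i≤m} u_i − ⟨λ, u⟩ + (β/2)‖s − u‖² has a unique global minimizer over ℝ^m, given by u* = (β^{-1}λ + s) − β^{-1}P, where P is the unique point of Δ_m closest in Euclidean norm to λ + βs. -/

import Mathlib

open scoped RealInnerProductSpace

/-- The unit simplex `Δ_m`, viewed inside the Euclidean space `ℝ^m`. -/
def simplexSetE (m : ℕ) : Set (EuclideanSpace ℝ (Fin m)) :=
  {w | (∀ i, 0 ≤ w i) ∧ ∑ i, w i = 1}

/-- The objective `f(u) = max_i u_i − ⟨λ, u⟩ + (β/2)‖s − u‖²`. -/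
noncomputable def objStep1 (m : ℕ) (β : ℝ) (lam s : EuclideanSpace ℝ (Fin m))
    (u : EuclideanSpace ℝ (Fin m)) : ℝ :=
  (⨆ i, u i) - ∑ i, lam i * u i + (β / 2) * ‖s - u‖ ^ 2

lemma simplex_convex (m : ℕ) : Convex ℝ (simplexSetE m) := by
  intro x hx y hy a b ha hb hab
  refine ⟨fun i => ?_, ?_⟩
  · have : (a • x + b • y) i = a * x i + b * y i := rfl
    rw [this]
    have := hx.1 i; have := hy.1 i
    positivity
  · have : ∑ i, (a • x + b • y) i = a * ∑ i, x i + b * ∑ i, y i := by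
      rw [Finset.mul_sum, Finset.mul_sum, ← Finset.sum_add_distrib]
      rfl
    rw [this, hx.2, hy.2]; linarith

lemma sum_eq_inner {m : ℕ} (lam u : EuclideanSpace ℝ (Fin m)) :
    ∑ i, lam i * u i = ⟪lam, u⟫ := by
  simp [PiLp.inner_apply, RCLike.inner_apply, mul_comm]

theorem stmt_8 (m : ℕ) (hm : 0 < m) (β : ℝ) (hβ : 0 < β)
    (lam s P : EuclideanSpace ℝ (Fin m))
    (hP : P ∈ simplexSetE m ∧
      ∀ q ∈ simplexSetE m, ‖lam + β • s - P‖ ≤ ‖lam + β • s - q‖) :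
    (∀ u, objStep1 m β lam s (β⁻¹ • lam + s - β⁻¹ • P) ≤ objStep1 m β lam s u) ∧
    ∀ u, (∀ u', objStep1 m β lam s u ≤ objStep1 m β lam s u') →
      u = β⁻¹ • lam + s - β⁻¹ • P := by
  haveI : Nonempty (Fin m) := ⟨⟨0, hm⟩⟩
  set v : EuclideanSpace ℝ (Fin m) := β⁻¹ • lam + s - β⁻¹ • P with hv
  set z : EuclideanSpace ℝ (Fin m) := lam + β • s with hz
  have hβ' : β ≠ 0 := hβ.ne'
  -- variational inequality
  haveI : Nonempty (simplexSetE m) := ⟨⟨P, hP.1⟩⟩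
  have hinf : ‖z - P‖ = ⨅ w : simplexSetE m, ‖z - w‖ := by
    refine le_antisymm (le_ciInf fun w => hP.2 w w.2) ?_
    have hbdd : BddBelow (Set.range fun w : simplexSetE m => ‖z - ↑w‖) := by
      refine ⟨0, ?_⟩
      rintro x ⟨w, rfl⟩
      exact norm_nonneg _
    exact ciInf_le hbdd ⟨P, hP.1⟩
  have hvar : ∀ q ∈ simplexSetE m, ⟪z - P, q - P⟫ ≤ 0 :=
    (norm_eq_iInf_iff_real_inner_le_zero (simplex_convex m) hP.1).1 hinf
  -- v = β⁻¹ • (z - P)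
  have hvz : v = β⁻¹ • (z - P) := by
    rw [hv, hz, smul_sub, smul_add, smul_smul, inv_mul_cancel₀ hβ', one_smul]
  -- β • (s - v) = P - lam
  have hsv : β • (s - v) = P - lam := by
    rw [hv]
    rw [show s - (β⁻¹ • lam + s - β⁻¹ • P) = β⁻¹ • P - β⁻¹ • lam by abel]
    rw [smul_sub, smul_smul, smul_smul, mul_inv_cancel₀ hβ', one_smul, one_smul]
  -- ⟪P, u⟫ ≤ sup u
  have hPu : ∀ u : EuclideanSpace ℝ (Fin m), ⟪P, u⟫ ≤ ⨆ i, u i := by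
    intro u
    rw [← sum_eq_inner]
    calc ∑ i, P i * u i ≤ ∑ i : Fin m, P i * (⨆ j, u j) :=
          Finset.sum_le_sum fun i _ =>
            mul_le_mul_of_nonneg_left (le_ciSup (Set.Finite.bddAbove (Set.finite_range u)) i)
              (hP.1.1 i)
      _ = ⨆ j, u j := by rw [← Finset.sum_mul, hP.1.2, one_mul]
  -- sup v = ⟪P, v⟫
  have hGv : (⨆ i, v i) = ⟪P, v⟫ := by
    refine le_antisymm (ciSup_le fun i => ?_) (hPu v)
    have hqi : (EuclideanSpace.single i (1 : ℝ)) ∈ simplexSetE m := by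
      constructor
      · intro j
        simp [EuclideanSpace.single_apply]
        split <;> norm_num
      · simp [EuclideanSpace.single_apply]
    have h1 := hvar _ hqi
    have h2 : ⟪v, EuclideanSpace.single i (1 : ℝ) - P⟫ ≤ 0 := by
      rw [hvz, real_inner_smul_left]
      have : (0:ℝ) < β⁻¹ := by positivity
      nlinarith
    rw [inner_sub_right] at h2
    have h3 : ⟪v, EuclideanSpace.single i (1 : ℝ)⟫ = v i := by
      rw [EuclideanSpace.inner_single_right]
      simp
    rw [h3] at h2
    rw [real_inner_comm]
    linarith
  -- key inequality
  have key : ∀ u, objStep1 m β lam s v + (β / 2) * ‖u - v‖ ^ 2 ≤ objStep1 m β lam s u := by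
    intro u
    have hident : objStep1 m β lam s u =
        objStep1 m β lam s v + ((⨆ i, u i) - ⟪P, u⟫) + (β / 2) * ‖u - v‖ ^ 2 := by
      unfold objStep1
      rw [hGv, sum_eq_inner, sum_eq_inner]
      rw [show s - u = (s - v) - (u - v) by abel, norm_sub_sq_real]
      have e2 : ⟪P, u⟫ - ⟪P, v⟫ = ⟪lam, u⟫ - ⟪lam, v⟫ + β * ⟪s - v, u - v⟫ := by
        have h := congrArg (fun w => ⟪w, u - v⟫) hsv
        simp only [real_inner_smul_left, inner_sub_left, inner_sub_right] at h
        have hx : ⟪s - v, u - v⟫ = ⟪s, u⟫ - ⟪v, u⟫ - (⟪s, v⟫ - ⟪v, v⟫) := by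
          simp only [inner_sub_left, inner_sub_right]
        rw [hx]
        linarith
      linarith [e2]
    have := hPu u
    rw [hident]
    linarith
  constructor
  · intro u
    have := key u
    have h0 : (0:ℝ) ≤ (β / 2) * ‖u - v‖ ^ 2 := by positivity
    linarith
  · intro u hu
    have h1 := hu v
    have h2 := key u
    have h3 : (β / 2) * ‖u - v‖ ^ 2 ≤ 0 := by linarith
    have h4 : ‖u - v‖ ^ 2 ≤ 0 := by
      by_contra h
      push_neg at h
      nlinarith
    have h5 : ‖u - v‖ = 0 := by nlinarith [norm_nonneg (u - v), sq_nonneg ‖u - v‖]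
    have := norm_eq_zero.mp h5
    have := sub_eq_zero.mp this
    exact this
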